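/- Substituting f(x) = 1/(1+θx^α) into the PGFL formula G_R[f] = 1/(1 + 2∫_0^1(1-f(x))x^{-3}dx) yields the PPP success probability p_s(θ) = 1/₂F₁(1,-δ;1-δ;-θ) where δ = 2/α; equivalently, 2∫_0^1 (θx^α/(1+θx^α)) x^{-3} dx = ₂F₁(1,-δ;1-δ;-θ) - 1. -/

import Mathlib

open MeasureTheory intervalIntegral
open Set

/-- The Gauss hypergeometric value ₂F₁(1, -δ; 1-δ; -θ) for 0 < δ < 1, θ ≥ 0,
via the identity ₂F₁(1,-δ;1-δ;-θ) = 1 + (δθ/(1-δ))·₂F₁(1,1-δ;2-δ;-θ) and the Euler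
integral representation ₂F₁(1,1-δ;2-δ;-θ) = (1-δ)∫_0^1 t^{-δ}/(1+θt) dt. -/
noncomputable def twoF1 (δ θ : ℝ) : ℝ :=
  1 + δ * θ * ∫ t in (0 : ℝ)..1, t ^ (-δ) / (1 + θ * t)

lemma subst_key (α δ θ : ℝ) (hα : 2 < α) (hδ : δ = 2 / α) (hθ : 0 ≤ θ) :
    (∫ x in (0:ℝ)..1, (x ^ α) ^ (-δ) / (1 + θ * x ^ α) * (α * x ^ (α - 1)))
    = ∫ t in (0:ℝ)..1, t ^ (-δ) / (1 + θ * t) := by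
  have hα0 : (0:ℝ) < α := by linarith
  have hδ1 : δ < 1 := by rw [hδ, div_lt_one hα0]; linarith
  have hδ0 : 0 < δ := by rw [hδ]; positivity
  have h :=
    integral_comp_mul_deriv''' (a := (0:ℝ)) (b := 1)
      (f := fun x => x ^ α) (f' := fun x => α * x ^ (α - 1))
      (g := fun t => t ^ (-δ) / (1 + θ * t))
      (by
        intro x _
        exact (Real.continuousAt_rpow_const x α (Or.inr hα0.le)).continuousWithinAt)
      (by
        intro x hx
        exact ((Real.hasDerivAt_rpow_const (p := α) (Or.inr (by linarith))).hasDerivWithinAt))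
      (by
        have hsub : (fun x : ℝ => x ^ α) '' Ioo (min (0:ℝ) 1) (max 0 1) ⊆ Ioi 0 := by
          simp only [min_eq_left zero_le_one, max_eq_right zero_le_one]
          rintro _ ⟨x, hx, rfl⟩
          exact Real.rpow_pos_of_pos hx.1 _
        refine ContinuousOn.mono ?_ hsub
        apply ContinuousOn.div
        · intro t ht
          exact (Real.continuousAt_rpow_const t (-δ) (Or.inl (ne_of_gt ht))).continuousWithinAt
        · fun_prop
        · intro t ht
          have : (0:ℝ) < t := ht
          nlinarith)
      (by
        have hsub : (fun x : ℝ => x ^ α) '' uIcc (0:ℝ) 1 ⊆ Icc 0 1 := by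
          rintro _ ⟨x, hx, rfl⟩
          rw [uIcc_of_le zero_le_one] at hx
          exact ⟨Real.rpow_nonneg hx.1 _, Real.rpow_le_one hx.1 hx.2 hα0.le⟩
        refine IntegrableOn.mono_set ?_ hsub
        have hint : IntegrableOn (fun t : ℝ => t ^ (-δ)) (Icc (0:ℝ) 1) := by
          rw [← uIcc_of_le (zero_le_one' ℝ)]
          exact (intervalIntegrable_iff' enorm_ne_top).mp (intervalIntegrable_rpow' (by linarith))
        refine Integrable.mono hint ?_ ?_
        · apply Measurable.aestronglyMeasurable
          apply Measurable.div <;> fun_prop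
        · rw [ae_restrict_iff' measurableSet_Icc]
          filter_upwards with t ht
          have h1 : (0:ℝ) ≤ t ^ (-δ) := Real.rpow_nonneg ht.1 _
          have h2 : (1:ℝ) ≤ 1 + θ * t := by nlinarith [ht.1]
          rw [Real.norm_eq_abs, Real.norm_eq_abs, abs_of_nonneg h1,
            abs_of_nonneg (div_nonneg h1 (by linarith))]
          rw [div_le_iff₀ (by linarith)]
          nlinarith)
      (by
        rw [uIcc_of_le (zero_le_one' ℝ)]
        have hint : IntegrableOn (fun x : ℝ => α * x ^ (α - 3)) (Icc (0:ℝ) 1) := by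
          apply Integrable.const_mul
          rw [← uIcc_of_le (zero_le_one' ℝ)]
          exact (intervalIntegrable_iff' enorm_ne_top).mp (intervalIntegrable_rpow' (by linarith))
        refine Integrable.mono hint ?_ ?_
        · apply Measurable.aestronglyMeasurable
          apply Measurable.mul
          · apply Measurable.div <;> fun_prop
          · fun_prop
        · rw [ae_restrict_iff' measurableSet_Icc]
          filter_upwards with x hx
          rcases eq_or_lt_of_le hx.1 with h0 | h0
          · simp [Function.comp, ← h0, Real.zero_rpow (ne_of_gt hα0),
              Real.zero_rpow (show α - 1 ≠ 0 by intro h; linarith)]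
            positivity
          · have hxa : (0:ℝ) < x ^ α := Real.rpow_pos_of_pos h0 _
            have h2 : (1:ℝ) ≤ 1 + θ * x ^ α := by nlinarith
            have e1 : (x ^ α) ^ (-δ) = x ^ (-2:ℝ) := by
              rw [← Real.rpow_mul h0.le]
              congr 1
              rw [hδ]
              field_simp
            have e2 : x ^ ((-2:ℝ)) * x ^ (α - 1) = x ^ (α - 3) := by
              rw [← Real.rpow_add h0]; ring_nf
            have hnum : (0:ℝ) ≤ x ^ (-2:ℝ) := Real.rpow_nonneg h0.le _
            have hA : (0:ℝ) ≤ α * x ^ (α - 1) := by positivity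
            simp only [Function.comp]
            rw [e1, Real.norm_eq_abs, Real.norm_eq_abs,
              abs_of_nonneg (by positivity : (0:ℝ) ≤ x ^ (-2:ℝ) / (1 + θ * x ^ α) * (α * x ^ (α - 1))),
              abs_of_nonneg (by positivity : (0:ℝ) ≤ α * x ^ (α - 3))]
            have h3 : x ^ (-2:ℝ) / (1 + θ * x ^ α) ≤ x ^ (-2:ℝ) := div_le_self hnum h2
            calc x ^ (-2:ℝ) / (1 + θ * x ^ α) * (α * x ^ (α - 1))
                ≤ x ^ (-2:ℝ) * (α * x ^ (α - 1)) := mul_le_mul_of_nonneg_right h3 hA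
              _ = α * x ^ (α - 3) := by rw [← mul_assoc, mul_comm (x ^ (-2:ℝ)) α, mul_assoc, e2])
  simpa [Real.zero_rpow (ne_of_gt hα0), Real.one_rpow, Function.comp] using h

/-- Substituting f(x) = 1/(1+θx^α) into the PGFL of the relative distance process of the
PPP yields the success probability p_s(θ) = 1/₂F₁(1,-δ;1-δ;-θ), δ = 2/α; equivalently
2∫_0^1 (θx^α/(1+θx^α)) x⁻³ dx = ₂F₁(1,-δ;1-δ;-θ) - 1. -/
theorem stmt5 (α δ θ : ℝ) (hα : 2 < α) (hδ : δ = 2 / α) (hθ : 0 ≤ θ) :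
    (2 * ∫ x in (0 : ℝ)..1, (θ * x ^ α / (1 + θ * x ^ α)) * x ^ (-3 : ℝ)
        = twoF1 δ θ - 1)
    ∧ 1 / (1 + 2 * ∫ x in (0 : ℝ)..1, (1 - 1 / (1 + θ * x ^ α)) * x ^ (-3 : ℝ))
        = 1 / twoF1 δ θ := by
  have hα0 : (0:ℝ) < α := by linarith
  have hδα : δ * α = 2 := by rw [hδ]; field_simp
  have hcong : ∀ x ∈ uIcc (0:ℝ) 1,
      (θ * x ^ α / (1 + θ * x ^ α)) * x ^ (-3 : ℝ)
        = (δ * θ / 2) * ((x ^ α) ^ (-δ) / (1 + θ * x ^ α) * (α * x ^ (α - 1))) := by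
    intro x hx
    rw [uIcc_of_le zero_le_one] at hx
    rcases eq_or_lt_of_le hx.1 with h0 | h0
    · simp [← h0, Real.zero_rpow (ne_of_gt hα0),
        Real.zero_rpow (show α - 1 ≠ 0 by intro h; linarith),
        Real.zero_rpow (show (-3:ℝ) ≠ 0 by norm_num)]
    · have hxa : (0:ℝ) < x ^ α := Real.rpow_pos_of_pos h0 _
      have hD : (0:ℝ) < 1 + θ * x ^ α := by nlinarith
      have e1 : (x ^ α) ^ (-δ) = x ^ (-2:ℝ) := by
        rw [← Real.rpow_mul h0.le]
        congr 1
        rw [hδ]; field_simp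
      have e2 : x ^ ((-2:ℝ)) * x ^ (α - 1) = x ^ (α - 3) := by
        rw [← Real.rpow_add h0]; ring_nf
      have e3 : x ^ α * x ^ ((-3:ℝ)) = x ^ (α - 3) := by
        rw [← Real.rpow_add h0]; ring_nf
      rw [e1]
      field_simp
      linear_combination (2*θ)*e3 - (δ*θ*α)*e2 - (θ*x^(α-3))*hδα
  have hmain : 2 * ∫ x in (0 : ℝ)..1, (θ * x ^ α / (1 + θ * x ^ α)) * x ^ (-3 : ℝ)
      = twoF1 δ θ - 1 := by
    rw [intervalIntegral.integral_congr hcong, intervalIntegral.integral_const_mul,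
      subst_key α δ θ hα hδ hθ]
    unfold twoF1; ring
  refine ⟨hmain, ?_⟩
  have h2 : ∀ x ∈ uIcc (0:ℝ) 1,
      (1 - 1 / (1 + θ * x ^ α)) * x ^ (-3 : ℝ)
        = (θ * x ^ α / (1 + θ * x ^ α)) * x ^ (-3 : ℝ) := by
    intro x hx
    rw [uIcc_of_le zero_le_one] at hx
    have hxa : (0:ℝ) ≤ x ^ α := Real.rpow_nonneg hx.1 _
    have hD : (0:ℝ) < 1 + θ * x ^ α := by nlinarith
    field_simp
    ring
  rw [intervalIntegral.integral_congr h2, hmain]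
  ring_nf
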